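/- Let S be the monoid presented by ⟨a, b | a² = 1, ab = b⟩, whose elements are {bⁱaᵏ : i ≥ 0, k ∈ {0,1}}. Then the ∼o-conjugacy classes of S are {1}, {a}, and {bⁱ, bⁱa} for each i ≥ 1. -/

import Mathlib

/-- The defining relations `a² = 1` and `ab = b` on the free monoid on two generators. -/
def baRel : FreeMonoid (Fin 2) → FreeMonoid (Fin 2) → Prop := fun x y =>
  (x = FreeMonoid.of 0 * FreeMonoid.of 0 ∧ y = 1) ∨
  (x = FreeMonoid.of 0 * FreeMonoid.of 1 ∧ y = FreeMonoid.of 1)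

/-- The monoid `S = ⟨a, b | a² = 1, ab = b⟩`. -/
abbrev BaMonoid := (conGen baRel).Quotient

def genA : BaMonoid := (conGen baRel).mk' (FreeMonoid.of 0)
def genB : BaMonoid := (conGen baRel).mk' (FreeMonoid.of 1)

/-- Otto conjugacy: `x ∼o y` iff `xg = gy` and `yh = hx` for some `g, h`. -/
def oRel {S : Type*} [Mul S] (x y : S) : Prop :=
  ∃ g h : S, x * g = g * y ∧ y * h = h * x

/-- Concrete model of the monoid: normal forms `bⁱaᵏ`. -/
@[ext] structure NF where
  i : ℕ
  k : Bool
deriving DecidableEq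

def NF.mul (x y : NF) : NF := if y.i = 0 then ⟨x.i, xor x.k y.k⟩ else ⟨x.i + y.i, y.k⟩

instance : Monoid NF where
  mul := NF.mul
  one := ⟨0, false⟩
  mul_assoc x y z := by
    show (x.mul y).mul z = x.mul (y.mul z)
    unfold NF.mul
    split_ifs <;> simp_all <;>
      first | omega | (cases x.k <;> cases y.k <;> cases z.k <;> simp_all)
  one_mul x := by
    show NF.mul ⟨0, false⟩ x = x
    unfold NF.mul
    split_ifs with h <;> cases x <;> simp_all
  mul_one x := by
    show NF.mul x ⟨0, false⟩ = x
    unfold NF.mul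
    simp

lemma NF.mul_def (a b : NF) :
    a * b = if b.i = 0 then ⟨a.i, xor a.k b.k⟩ else (⟨a.i + b.i, b.k⟩ : NF) := rfl

lemma NF.one_def : (1 : NF) = ⟨0, false⟩ := rfl

def fNF : Fin 2 → NF := ![⟨0, true⟩, ⟨1, false⟩]

lemma ker_le : conGen baRel ≤ Con.ker (FreeMonoid.lift fNF) := by
  apply Con.conGen_le.2
  rintro x y (⟨rfl, rfl⟩ | ⟨rfl, rfl⟩) <;>
    simp [Con.ker_rel, fNF, NF.mul_def, NF.one_def]

def φ : BaMonoid →* NF := Con.lift _ (FreeMonoid.lift fNF) ker_le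

lemma φ_mk (w : FreeMonoid (Fin 2)) : φ ((conGen baRel).mk' w) = FreeMonoid.lift fNF w :=
  Con.lift_mk' _ _

lemma φ_coe (w : FreeMonoid (Fin 2)) : φ (w : BaMonoid) = FreeMonoid.lift fNF w :=
  Con.lift_coe _ _

lemma φ_genA : φ genA = ⟨0, true⟩ := by simp [genA, φ_mk, φ_coe, fNF]
lemma φ_genB : φ genB = ⟨1, false⟩ := by simp [genB, φ_mk, φ_coe, fNF]

lemma φ_genB_pow (i : ℕ) : φ (genB ^ i) = ⟨i, false⟩ := by
  induction i with
  | zero => simp [NF.one_def]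
  | succ n ih => rw [pow_succ, map_mul, ih, φ_genB, NF.mul_def]; simp

lemma φ_nf (i : ℕ) (t : Bool) : φ (genB ^ i * cond t genA 1) = ⟨i, t⟩ := by
  cases t <;> simp [φ_genB_pow, φ_genA, NF.mul_def]

lemma aa : genA * genA = 1 := by
  have : (conGen baRel) (FreeMonoid.of 0 * FreeMonoid.of 0) 1 :=
    ConGen.Rel.of _ _ (Or.inl ⟨rfl, rfl⟩)
  rw [← Con.eq] at this
  simpa [genA, map_mul] using this

lemma ab : genA * genB = genB := by
  have : (conGen baRel) (FreeMonoid.of 0 * FreeMonoid.of 1) (FreeMonoid.of 1) :=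
    ConGen.Rel.of _ _ (Or.inr ⟨rfl, rfl⟩)
  rw [← Con.eq] at this
  simpa [genA, genB, map_mul] using this

lemma a_pow_b (i : ℕ) (hi : 1 ≤ i) : genA * genB ^ i = genB ^ i := by
  obtain ⟨n, rfl⟩ := Nat.exists_eq_add_of_le hi
  rw [pow_add, pow_one, ← mul_assoc, ab]

lemma nf_exists (x : BaMonoid) : ∃ i t, x = genB ^ i * cond t genA 1 := by
  induction x using Con.induction_on with
  | H w =>
    induction w using FreeMonoid.recOn with
    | one => exact ⟨0, false, by simp⟩
    | of_mul a w ih =>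
      obtain ⟨i, t, h⟩ := ih
      rw [Con.coe_mul, h]
      fin_cases a
      · -- genA * (genB^i * t)
        show ∃ i' t', genA * (genB ^ i * cond t genA 1) = _
        rcases Nat.eq_zero_or_pos i with rfl | hi
        · cases t
          · exact ⟨0, true, by simp⟩
          · exact ⟨0, false, by simp [← mul_assoc, aa]⟩
        · exact ⟨i, t, by rw [← mul_assoc, a_pow_b i hi]⟩
      · exact ⟨i + 1, t, by show genB * _ = _; rw [pow_succ', mul_assoc]⟩

lemma key {p q : NF} (h : oRel p q) : p.i = q.i ∧ (p.k = q.k ∨ 1 ≤ p.i) := by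
  obtain ⟨g, h', e1, e2⟩ := h
  obtain ⟨i, k⟩ := p; obtain ⟨j, l⟩ := q
  obtain ⟨m, n⟩ := g; obtain ⟨m', n'⟩ := h'
  simp only [NF.mul_def] at e1 e2
  split_ifs at e1 e2 <;> simp_all [NF.mk.injEq] <;>
    (try omega) <;> (cases k <;> cases l <;> simp_all <;> omega)

/-- In `S = ⟨a, b | a² = 1, ab = b⟩`, the `∼o`-classes are `{1}`, `{a}`, and
`{bⁱ, bⁱa}` for each `i ≥ 1`. -/
theorem stmt_9 (x y : BaMonoid) :
    oRel x y ↔ (x = y ∨ ∃ i : ℕ, 1 ≤ i ∧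
      ((x = genB ^ i ∧ y = genB ^ i * genA) ∨ (x = genB ^ i * genA ∧ y = genB ^ i))) := by
  constructor
  · rintro ⟨g, h, e1, e2⟩
    obtain ⟨i, t, rfl⟩ := nf_exists x
    obtain ⟨j, s, rfl⟩ := nf_exists y
    have hk : oRel (φ (genB ^ i * cond t genA 1)) (φ (genB ^ j * cond s genA 1)) :=
      ⟨φ g, φ h, by rw [← map_mul, ← map_mul, e1], by rw [← map_mul, ← map_mul, e2]⟩
    have := key hk
    rw [φ_nf, φ_nf] at this
    obtain ⟨hij, hts⟩ := this
    simp only at hij hts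
    subst hij
    rcases hts with rfl | hi
    · exact Or.inl rfl
    · cases t <;> cases s
      · exact Or.inl rfl
      · exact Or.inr ⟨i, hi, Or.inl ⟨by simp, rfl⟩⟩
      · exact Or.inr ⟨i, hi, Or.inr ⟨rfl, by simp⟩⟩
      · exact Or.inl rfl
  · rintro (rfl | ⟨i, hi, ⟨rfl, rfl⟩ | ⟨rfl, rfl⟩⟩)
    · exact ⟨1, 1, by simp, by simp⟩
    · exact ⟨genA, genA, by rw [← mul_assoc, a_pow_b i hi],
        by rw [mul_assoc, aa, mul_one, a_pow_b i hi]⟩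
    · exact ⟨genA, genA, by rw [mul_assoc, aa, mul_one, a_pow_b i hi],
        by rw [← mul_assoc, a_pow_b i hi]⟩
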